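/- arXiv:2007.08280 — 2 statements merged into one kernel-verified Lean document; each statement's English description precedes it below -/
import Mathlib

section
/- Let k ⊆ ℂ be a subfield, k₀ = k ∩ ℝ, k̄ the algebraic closure of k in ℂ, and k̃ the real closure of k₀ in ℝ. Then the following are equivalent: (1) k is algebraic over k₀; (2) k̄ is algebraic over k₀; (3) k̄ is algebraic over k̃; (4) [k̄ : k̃] = 2. -/
/-- `x ∈ ℂ` is algebraic over the subfield `K ⊆ ℂ`: it is a root of a nonzero polynomial
with coefficients in `K`. -/
def AlgebraicOver (K : Subfield ℂ) (x : ℂ) : Prop :=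
  ∃ p : Polynomial ℂ, p ≠ 0 ∧ (∀ n, p.coeff n ∈ K) ∧ Polynomial.eval x p = 0

open Polynomial

lemma ao_iff {K : Subfield ℂ} {x : ℂ} : AlgebraicOver K x ↔ IsAlgebraic K x := by
  constructor
  · rintro ⟨p, hp0, hc, hev⟩
    refine ⟨∑ n ∈ p.support, C (⟨p.coeff n, hc n⟩ : K) * X ^ n, ?_, ?_⟩
    · intro h
      apply hp0
      have := congrArg (Polynomial.map (algebraMap K ℂ)) h
      simp only [Polynomial.map_sum, Polynomial.map_mul, Polynomial.map_pow, map_C, map_X,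
        Polynomial.map_zero, C_mul_X_pow_eq_monomial, map_monomial] at this
      have hcast : ∀ (y : K), algebraMap K ℂ y = (y : ℂ) := fun _ => rfl
      simp only [hcast] at this
      rwa [← p.as_sum_support] at this
    · rw [map_sum]
      simp only [map_mul, map_pow, aeval_C, aeval_X]
      have : ∀ n ∈ p.support, (algebraMap K ℂ) (⟨p.coeff n, hc n⟩ : K) * x ^ n = p.coeff n * x ^ n :=
        fun n _ => rfl
      rw [Finset.sum_congr rfl this]
      rw [Polynomial.eval_eq_sum, Polynomial.sum_def] at hev
      exact hev
  · rintro ⟨q, hq0, hev⟩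
    refine ⟨q.map (algebraMap K ℂ), Polynomial.map_ne_zero hq0, fun n => ?_, ?_⟩
    · rw [coeff_map]; exact (q.coeff n).2
    · rw [eval_map, ← aeval_def]; exact hev

lemma ao_mem {K : Subfield ℂ} {x : ℂ} (hx : x ∈ K) : AlgebraicOver K x := by
  refine ⟨X - C x, X_sub_C_ne_zero x, fun n => ?_, by simp⟩
  rw [sub_eq_add_neg]
  rcases n with _ | _ | n <;>
    simp [coeff_X, coeff_C, neg_mem, hx, K.one_mem, K.zero_mem]

lemma ao_mono {K L : Subfield ℂ} (h : K ≤ L) {x : ℂ} (hx : AlgebraicOver K x) :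
    AlgebraicOver L x := by
  obtain ⟨p, h0, hc, he⟩ := hx
  exact ⟨p, h0, fun n => h (hc n), he⟩

lemma ao_trans {K L : Subfield ℂ} (h : K ≤ L) (hL : ∀ y ∈ L, AlgebraicOver K y)
    {x : ℂ} (hx : AlgebraicOver L x) : AlgebraicOver K x := by
  letI : Algebra K L := (Subfield.inclusion h).toAlgebra
  haveI : IsScalarTower K L ℂ := IsScalarTower.of_algebraMap_eq (fun _ => rfl)
  haveI : Algebra.IsAlgebraic K L := by
    constructor
    intro y
    have : IsAlgebraic K (algebraMap L ℂ y) := ao_iff.mp (hL y y.2)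
    exact (isAlgebraic_algebraMap_iff (R := K) (S := L) (A := ℂ) (a := y) Subtype.val_injective).mp this
  haveI : Algebra.IsIntegral K L := Algebra.IsAlgebraic.isIntegral
  have hx' : IsIntegral L x := isAlgebraic_iff_isIntegral.mp (ao_iff.mp hx)
  exact ao_iff.mpr (isAlgebraic_iff_isIntegral.mpr (isIntegral_trans x hx'))

lemma ao_add {K : Subfield ℂ} {x y : ℂ} (hx : AlgebraicOver K x) (hy : AlgebraicOver K y) :
    AlgebraicOver K (x + y) :=
  ao_iff.mpr (isAlgebraic_iff_isIntegral.mpr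
    ((isAlgebraic_iff_isIntegral.mp (ao_iff.mp hx)).add
      (isAlgebraic_iff_isIntegral.mp (ao_iff.mp hy))))

lemma ao_mul {K : Subfield ℂ} {x y : ℂ} (hx : AlgebraicOver K x) (hy : AlgebraicOver K y) :
    AlgebraicOver K (x * y) :=
  ao_iff.mpr (isAlgebraic_iff_isIntegral.mpr
    ((isAlgebraic_iff_isIntegral.mp (ao_iff.mp hx)).mul
      (isAlgebraic_iff_isIntegral.mp (ao_iff.mp hy))))

lemma ao_conj {K : Subfield ℂ} (hK : ∀ y ∈ K, ∃ r : ℝ, (r : ℂ) = y) {x : ℂ}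
    (hx : AlgebraicOver K x) : AlgebraicOver K ((starRingEnd ℂ) x) := by
  obtain ⟨p, h0, hc, he⟩ := hx
  refine ⟨p.map (starRingEnd ℂ), Polynomial.map_ne_zero h0, fun n => ?_, ?_⟩
  · rw [coeff_map]
    obtain ⟨r, hr⟩ := hK _ (hc n)
    rw [← hr, Complex.conj_ofReal, hr]
    exact hc n
  · rw [eval_map, eval₂_hom, he, map_zero]

set_option maxHeartbeats 1600000 in
/-- For a subfield `k ⊆ ℂ`, with `k₀ = k ∩ ℝ`, `k̄` the algebraic closure of `k` in `ℂ` and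
`k̃` the real closure of `k₀` in `ℝ`, the following are equivalent: (1) `k/k₀` is algebraic;
(2) `k̄/k₀` is algebraic; (3) `k̄/k̃` is algebraic; (4) `[k̄ : k̃] = 2`. -/
theorem stmt0 (k k0 kbar ktilde : Subfield ℂ)
    (hk0 : ∀ x : ℂ, x ∈ k0 ↔ x ∈ k ∧ ∃ r : ℝ, (r : ℂ) = x)
    (hkbar : ∀ x : ℂ, x ∈ kbar ↔ AlgebraicOver k x)
    (hktilde : ∀ x : ℂ, x ∈ ktilde ↔ (∃ r : ℝ, (r : ℂ) = x) ∧ AlgebraicOver k0 x)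
    (hle : ktilde ≤ kbar) :
    ((∀ x ∈ k, AlgebraicOver k0 x) ↔ (∀ x ∈ kbar, AlgebraicOver k0 x)) ∧
    ((∀ x ∈ kbar, AlgebraicOver k0 x) ↔ (∀ x ∈ kbar, AlgebraicOver ktilde x)) ∧
    ((∀ x ∈ kbar, AlgebraicOver ktilde x) ↔
      (letI : Algebra ktilde kbar := (Subfield.inclusion hle).toAlgebra
       Module.finrank ktilde kbar = 2)) := by
  have hk0k : k0 ≤ k := fun x hx => ((hk0 x).mp hx).1
  have hk0t : k0 ≤ ktilde := fun x hx => (hktilde x).mpr ⟨((hk0 x).mp hx).2, ao_mem hx⟩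
  have htalg : ∀ y ∈ ktilde, AlgebraicOver k0 y := fun y hy => ((hktilde y).mp hy).2
  have hreal_t : ∀ y ∈ ktilde, ∃ r : ℝ, (r : ℂ) = y := fun y hy => ((hktilde y).mp hy).1
  have hmem_t : ∀ z : ℂ, (∃ r : ℝ, (r : ℂ) = z) → AlgebraicOver ktilde z → z ∈ ktilde :=
    fun z hr hz => (hktilde z).mpr ⟨hr, ao_trans hk0t htalg hz⟩
  have hI : Complex.I ∈ kbar := by
    rw [hkbar]
    refine ⟨X ^ 2 + 1, ?_, fun n => ?_, by simp [Complex.I_sq]⟩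
    · intro hcon
      have := congrArg (Polynomial.coeff · 2) hcon
      simp [coeff_X_pow, coeff_one] at this
    · rcases n with _ | _ | _ | n <;>
        simp [coeff_X_pow, coeff_one, k.one_mem, k.zero_mem]
  refine ⟨⟨?_, ?_⟩, ⟨?_, ?_⟩, ?_, ?_⟩
  · intro h x hx
    exact ao_trans hk0k h ((hkbar x).mp hx)
  · intro h x hx
    exact h x ((hkbar x).mpr (ao_mem hx))
  · intro h x hx
    exact ao_mono hk0t (h x hx)
  · intro h x hx
    exact ao_trans hk0t htalg (h x hx)
  · -- (3) → (4)
    intro h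
    letI : Algebra ktilde kbar := (Subfield.inclusion hle).toAlgebra
    show Module.finrank ktilde kbar = 2
    have hhalf : (1/2 : ℂ) ∈ ktilde := by
      apply hk0t
      rw [hk0]
      have h2k : (2 : ℂ) ∈ k := by
        have := k.add_mem k.one_mem k.one_mem
        norm_num at this
        norm_num
      exact ⟨k.div_mem k.one_mem h2k, ⟨1/2, by push_cast; ring⟩⟩
    have hAI : AlgebraicOver ktilde Complex.I := h _ hI
    have key : ∀ x : ℂ, x ∈ kbar → ((x.re : ℂ) ∈ ktilde ∧ (x.im : ℂ) ∈ ktilde) := by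
      intro x hx
      have hx' := h x hx
      have hconj := ao_conj hreal_t hx'
      have hre : (x.re : ℂ) = (x + (starRingEnd ℂ) x) * (1/2) := by
        rw [Complex.add_conj]; push_cast; ring
      have him : (x.im : ℂ) = (x + (-1) * (starRingEnd ℂ) x) * (-(1/2) * Complex.I) := by
        rw [show x + (-1) * (starRingEnd ℂ) x = x - (starRingEnd ℂ) x by ring,
          Complex.sub_conj]
        push_cast
        linear_combination (x.im : ℂ) * Complex.I_sq
      constructor
      · refine hmem_t _ ⟨x.re, rfl⟩ ?_
        rw [hre]
        exact ao_mul (ao_add hx' hconj) (ao_mem hhalf)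
      · refine hmem_t _ ⟨x.im, rfl⟩ ?_
        rw [him]
        exact ao_mul (ao_add hx' (ao_mul (ao_mem (neg_mem ktilde.one_mem)) hconj))
          (ao_mul (ao_mem (neg_mem hhalf)) hAI)
    have hsmul : ∀ (a : ktilde) (x : kbar), ((a • x : kbar) : ℂ) = (a : ℂ) * (x : ℂ) :=
      fun a x => rfl
    set iK : kbar := ⟨Complex.I, hI⟩ with hiK
    have li : LinearIndependent ktilde ![(1 : kbar), iK] := by
      rw [linearIndependent_fin2]
      constructor
      · simp only [Matrix.cons_val_one, Matrix.head_cons]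
        intro hcon
        apply Complex.I_ne_zero
        exact congrArg Subtype.val hcon
      · intro a hcon
        simp only [Matrix.cons_val_one, Matrix.head_cons, Matrix.cons_val_zero] at hcon
        have h1 : ((a • iK : kbar) : ℂ) = ((1 : kbar) : ℂ) := congrArg Subtype.val hcon
        rw [hsmul] at h1
        obtain ⟨r, hr⟩ := hreal_t _ a.2
        rw [← hr] at h1
        have := congrArg Complex.re h1
        simp [hiK] at this
    have hsp : ⊤ ≤ Submodule.span ktilde (Set.range ![(1 : kbar), iK]) := by
      intro x _
      have hrange : Set.range ![(1 : kbar), iK] = {(1 : kbar), iK} := by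
        simp [Matrix.range_cons, Matrix.range_empty, Set.pair_comm]
      rw [hrange]
      obtain ⟨hre, him⟩ := key (x : ℂ) x.2
      refine Submodule.mem_span_pair.mpr ⟨⟨_, hre⟩, ⟨_, him⟩, ?_⟩
      apply Subtype.ext
      push_cast [hsmul]
      simpa [hiK] using Complex.re_add_im (x : ℂ)
    let b : Module.Basis (Fin 2) ktilde kbar := Module.Basis.mk li hsp
    rw [Module.finrank_eq_card_basis b, Fintype.card_fin]
  · -- (4) → (3)
    intro h
    letI : Algebra ktilde kbar := (Subfield.inclusion hle).toAlgebra
    have h2 : Module.finrank ktilde kbar = 2 := h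
    haveI : IsScalarTower ktilde kbar ℂ := IsScalarTower.of_algebraMap_eq (fun _ => rfl)
    haveI : FiniteDimensional ktilde kbar :=
      FiniteDimensional.of_finrank_pos (by rw [h2]; norm_num)
    intro x hx
    have hint : IsIntegral ktilde (⟨x, hx⟩ : kbar) := IsIntegral.of_finite _ _
    have : IsAlgebraic ktilde (algebraMap kbar ℂ (⟨x, hx⟩ : kbar)) :=
      (isAlgebraic_algebraMap_iff (R := ktilde) (S := kbar) (A := ℂ)
        Subtype.val_injective).mpr (isAlgebraic_iff_isIntegral.mpr hint)
    exact ao_iff.mpr this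
end

section
/- There exists an example showing the intersection with ℝ of a subfield of ℂ can be ℚ even when the field has transcendence degree 1: if a, b ∈ ℝ are such that trdeg_ℚ ℚ(a,b) = 2, then ℚ(a + b·i) ∩ ℝ = ℚ. -/
open Polynomial in
theorem aux_indep (a b : ℝ) (h : AlgebraicIndependent ℚ ![a, b]) :
    AlgebraicIndependent ℚ
      ![(a : ℂ) + (b : ℂ) * Complex.I, (a : ℂ) - (b : ℂ) * Complex.I] := by
  set g : (MvPolynomial (Fin 2) ℚ)[X] := X ^ 2 + 1 with hgdef
  have hg : g.Monic := by
    have := Polynomial.monic_X_pow_add_C (R := MvPolynomial (Fin 2) ℚ)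
      (1 : MvPolynomial (Fin 2) ℚ) (two_ne_zero)
    simpa [hgdef] using this
  have hdeg : g.degree ≠ 0 := by
    rw [hgdef, show (1 : (MvPolynomial (Fin 2) ℚ)[X]) = Polynomial.C 1 from
      (Polynomial.C_1).symm, Polynomial.degree_X_pow_add_C (by norm_num)]
    norm_num
  have : Nontrivial (AdjoinRoot g) := AdjoinRoot.nontrivial g hdeg
  set u : AdjoinRoot g := AdjoinRoot.of g (MvPolynomial.X 0) with hu
  set v : AdjoinRoot g := AdjoinRoot.of g (MvPolynomial.X 1) with hv
  set r : AdjoinRoot g := AdjoinRoot.root g with hrdef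
  have hr2 : r * r = -1 := by
    have h0 : AdjoinRoot.mk g g = 0 := AdjoinRoot.mk_self
    have h1 : r ^ 2 + 1 = 0 := by
      simpa [hgdef, map_add, map_pow, map_one, AdjoinRoot.mk_X] using h0
    linear_combination h1
  set cB : ℚ →+* MvPolynomial (Fin 2) ℚ := MvPolynomial.C with hcB
  set ρ : MvPolynomial (Fin 2) ℚ →+* AdjoinRoot g :=
    MvPolynomial.eval₂Hom ((AdjoinRoot.of g).comp cB) ![u + v * r, u - v * r] with hρ
  set e : MvPolynomial (Fin 2) ℚ →+* ℂ :=
    (MvPolynomial.aeval ![(a : ℂ), (b : ℂ)]).toRingHom with he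
  have hgI : Polynomial.eval₂ e Complex.I g = 0 := by
    simp [hgdef, Complex.I_sq]
  set θ : AdjoinRoot g →+* ℂ := AdjoinRoot.lift e Complex.I hgI with hθ
  have hθof : ∀ s, θ (AdjoinRoot.of g s) = e s := fun s =>
    DFunLike.congr_fun (AdjoinRoot.lift_comp_of hgI) s
  have hθr : θ r = Complex.I := AdjoinRoot.lift_root hgI
  have expand : ∀ j : Fin 2, ρ (MvPolynomial.X j) = ![u + v * r, u - v * r] j := fun j => by
    simp [hρ, MvPolynomial.eval₂Hom_X']
  have expandC : ∀ q : ℚ, ρ (MvPolynomial.C q) = AdjoinRoot.of g (cB q) := fun q => by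
    simp [hρ]
  -- θ ∘ ρ = aeval ![z,w]
  have hcomp : θ.comp ρ =
      (MvPolynomial.aeval
        ![(a : ℂ) + (b : ℂ) * Complex.I, (a : ℂ) - (b : ℂ) * Complex.I]).toRingHom := by
    apply MvPolynomial.ringHom_ext
    · intro q
      simp only [RingHom.comp_apply, expandC, hθof]
      simp [he, hcB, MvPolynomial.aeval_C, eq_ratCast]
    · intro i
      fin_cases i <;>
        simp [RingHom.comp_apply, expand, map_add, map_sub, map_mul, hθof, hθr, hu, hv, he,
          MvPolynomial.aeval_X]
  -- injectivity of ρ via a retraction δ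
  set half : AdjoinRoot g := AdjoinRoot.of g (cB (1/2 : ℚ)) with hhalf
  have h2 : half * 2 = 1 := by
    rw [hhalf, show (2 : AdjoinRoot g) = AdjoinRoot.of g (cB (2 : ℚ)) by
      push_cast [map_ofNat]; rfl, ← map_mul, ← map_mul]
    norm_num
  set f : MvPolynomial (Fin 2) ℚ →+* AdjoinRoot g :=
    MvPolynomial.eval₂Hom ((AdjoinRoot.of g).comp cB)
      ![half * (u + v), half * (v - u) * r] with hf
  have hfg : Polynomial.eval₂ f r g = 0 := by
    simp [hgdef]
    linear_combination hr2
  set δ : AdjoinRoot g →+* AdjoinRoot g := AdjoinRoot.lift f r hfg with hδ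
  have hδof : ∀ s, δ (AdjoinRoot.of g s) = f s := fun s =>
    DFunLike.congr_fun (AdjoinRoot.lift_comp_of hfg) s
  have hδr : δ r = r := AdjoinRoot.lift_root hfg
  have hfX : ∀ j : Fin 2, f (MvPolynomial.X j) = ![half * (u + v), half * (v - u) * r] j :=
    fun j => by simp [hf, MvPolynomial.eval₂Hom_X']
  have hfC : ∀ q : ℚ, f (MvPolynomial.C q) = AdjoinRoot.of g (cB q) := fun q => by
    simp [hf]
  have hδu : δ u = f (MvPolynomial.X 0) := hδof _
  have hδv : δ v = f (MvPolynomial.X 1) := hδof _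
  have hretr : δ.comp ρ = AdjoinRoot.of g := by
    apply MvPolynomial.ringHom_ext
    · intro q
      simp only [RingHom.comp_apply, expandC, hδof, hfC]
      exact hfC q
    · intro i
      fin_cases i
      · simp only [RingHom.comp_apply, expand, Fin.mk_zero, Fin.mk_one, Matrix.cons_val_zero, Matrix.cons_val_one,
          Matrix.head_cons, map_add, map_sub, map_mul, hδu, hδv, hδof, hδr, hfX]
        linear_combination (half * (v - u)) * hr2 + u * h2
      · simp only [RingHom.comp_apply, expand, Fin.mk_zero, Fin.mk_one, Matrix.cons_val_zero, Matrix.cons_val_one,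
          Matrix.head_cons, map_add, map_sub, map_mul, hδu, hδv, hδof, hδr, hfX]
        linear_combination (-(half * (v - u))) * hr2 + v * h2
  have hρinj : Function.Injective ρ := by
    have hofinj : Function.Injective (AdjoinRoot.of g) :=
      AdjoinRoot.of.injective_of_degree_ne_zero hdeg
    intro s t hst
    apply hofinj
    rw [show AdjoinRoot.of g s = δ.comp ρ s from (DFunLike.congr_fun hretr s).symm,
      show AdjoinRoot.of g t = δ.comp ρ t from (DFunLike.congr_fun hretr t).symm]
    simp only [RingHom.comp_apply, hst]
  have heR : ∀ s, e s = Complex.ofReal ((MvPolynomial.aeval ![a, b]) s) := by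
    have hcm : Complex.ofRealHom.comp (MvPolynomial.aeval ![a, b]).toRingHom = e := by
      apply MvPolynomial.ringHom_ext
      · intro q
        simp [he, eq_ratCast, MvPolynomial.aeval_C]
      · intro i
        fin_cases i <;> simp [he, MvPolynomial.aeval_X]
    intro s
    rw [← hcm]
    rfl
  have hgnat : g.natDegree = 2 := by
    rw [hgdef, show (1 : (MvPolynomial (Fin 2) ℚ)[X]) = Polynomial.C 1 from
      (Polynomial.C_1).symm, Polynomial.natDegree_X_pow_add_C]
  have hθinj : Function.Injective θ := by
    refine (injective_iff_map_eq_zero θ).mpr ?_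
    intro t ht
    obtain ⟨p, hpdeg, rfl⟩ := (AdjoinRoot.powerBasis' hg).exists_eq_aeval t
    rw [AdjoinRoot.powerBasis'_dim, hgnat] at hpdeg
    have hp : p = Polynomial.C (p.coeff 1) * X + Polynomial.C (p.coeff 0) :=
      Polynomial.eq_X_add_C_of_natDegree_le_one (by omega)
    rw [AdjoinRoot.powerBasis'_gen] at ht ⊢
    rw [hp] at ht ⊢
    have hteq : Polynomial.aeval (AdjoinRoot.root g)
        (Polynomial.C (p.coeff 1) * X + Polynomial.C (p.coeff 0)) =
        AdjoinRoot.of g (p.coeff 1) * r + AdjoinRoot.of g (p.coeff 0) := by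
      simp [hrdef, AdjoinRoot.algebraMap_eq]
    rw [hteq] at ht ⊢
    rw [map_add, map_mul, hθof, hθof, hθr, heR, heR] at ht
    have hre : (MvPolynomial.aeval ![a, b]) (p.coeff 0) = 0 := by
      have := congrArg Complex.re ht
      simpa using this
    have him : (MvPolynomial.aeval ![a, b]) (p.coeff 1) = 0 := by
      have := congrArg Complex.im ht
      simpa using this
    have hc0 : p.coeff 0 = 0 := algebraicIndependent_iff.mp h _ hre
    have hc1 : p.coeff 1 = 0 := algebraicIndependent_iff.mp h _ him
    rw [hc0, hc1]
    simp
  rw [algebraicIndependent_iff]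
  intro F hF
  have h1 : θ (ρ F) = 0 := by
    have := DFunLike.congr_fun hcomp F
    simp only [RingHom.comp_apply] at this
    rw [this]
    exact hF
  have h2' : ρ F = 0 := hθinj (by rw [h1, map_zero])
  exact hρinj (by rw [h2', map_zero])

/-- If `a, b ∈ ℝ` are algebraically independent over `ℚ` (i.e. `trdeg_ℚ ℚ(a,b) = 2`),
then `ℚ(a + b·i) ∩ ℝ = ℚ` inside `ℂ`. -/
theorem stmt2 (a b : ℝ) (h : AlgebraicIndependent ℚ ![a, b]) :
    Subfield.closure {(a : ℂ) + (b : ℂ) * Complex.I} ⊓ Complex.ofRealHom.fieldRange =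
      (algebraMap ℚ ℂ).fieldRange := by
  have hindep := aux_indep a b h
  set z : ℂ := (a : ℂ) + (b : ℂ) * Complex.I with hz
  set w : ℂ := (a : ℂ) - (b : ℂ) * Complex.I with hw
  apply le_antisymm
  · intro x hx
    obtain ⟨hx1, hx2⟩ := Subfield.mem_inf.mp hx
    obtain ⟨y, hy⟩ := RingHom.mem_fieldRange.mp hx2
    obtain ⟨s, hs, t, ht, hst⟩ := Subfield.mem_closure_iff.mp hx1
    have hpoly : ∀ c ∈ Subring.closure ({z} : Set ℂ),
        ∃ p : Polynomial ℤ, Polynomial.aeval z p = c := by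
      intro c hc
      have hc' : c ∈ Algebra.adjoin ℤ ({z} : Set ℂ) := by
        rw [Algebra.adjoin_int]
        exact hc
      rw [Algebra.adjoin_singleton_eq_range_aeval] at hc'
      exact (AlgHom.mem_range _).mp hc'
    obtain ⟨P, hP⟩ := hpoly s hs
    obtain ⟨Q, hQ⟩ := hpoly t ht
    by_cases ht0 : t = 0
    · refine RingHom.mem_fieldRange.mpr ⟨0, ?_⟩
      rw [← hst, ht0]
      simp
    -- conjugation facts
    have hxconj : (starRingEnd ℂ) x = x := by
      rw [← hy]
      simpa using Complex.conj_ofReal y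
    have hconjz : (starRingEnd ℂ) z = w := by
      simp [hz, hw, Complex.conj_ofReal]
      ring
    have hconj_aeval : ∀ p : Polynomial ℤ,
        (starRingEnd ℂ) (Polynomial.aeval z p) = Polynomial.aeval w p := by
      intro p
      have h1 : Polynomial.aeval ((starRingEnd ℂ) z) p
          = (starRingEnd ℂ) (Polynomial.aeval z p) :=
        Polynomial.aeval_algHom_apply ((starRingEnd ℂ) : ℂ →+* ℂ).toIntAlgHom z p
      rw [hconjz] at h1
      exact h1.symm
    -- the cross-multiplied relation
    have hxt : x * t = s := by
      rw [← hst]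
      field_simp
    have hxt' : x * Polynomial.aeval w Q = Polynomial.aeval w P := by
      have := congrArg (starRingEnd ℂ) hxt
      rw [map_mul, hxconj, ← hP, ← hQ, hconj_aeval, hconj_aeval] at this
      exact this
    have hrel : Polynomial.aeval z P * Polynomial.aeval w Q
        = Polynomial.aeval w P * Polynomial.aeval z Q := by
      rw [hP, hQ, ← hxt, ← hxt']
      ring
    -- lift to an MvPolynomial identity
    set P' : Polynomial ℚ := P.map (Int.castRingHom ℚ) with hP'
    set Q' : Polynomial ℚ := Q.map (Int.castRingHom ℚ) with hQ'
    have haevalP' : ∀ c : ℂ, Polynomial.aeval c P' = Polynomial.aeval c P := fun c => by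
      rw [hP', show Int.castRingHom ℚ = algebraMap ℤ ℚ from rfl,
        Polynomial.aeval_map_algebraMap]
    have haevalQ' : ∀ c : ℂ, Polynomial.aeval c Q' = Polynomial.aeval c Q := fun c => by
      rw [hQ', show Int.castRingHom ℚ = algebraMap ℤ ℚ from rfl,
        Polynomial.aeval_map_algebraMap]
    set A0 : MvPolynomial (Fin 2) ℚ := Polynomial.aeval (MvPolynomial.X 0) P' with hA0
    set A1 : MvPolynomial (Fin 2) ℚ := Polynomial.aeval (MvPolynomial.X 1) P' with hA1
    set B0 : MvPolynomial (Fin 2) ℚ := Polynomial.aeval (MvPolynomial.X 0) Q' with hB0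
    set B1 : MvPolynomial (Fin 2) ℚ := Polynomial.aeval (MvPolynomial.X 1) Q' with hB1
    have hev : ∀ (p' : Polynomial ℚ) (j : Fin 2),
        MvPolynomial.aeval ![z, w] (Polynomial.aeval (MvPolynomial.X j : MvPolynomial (Fin 2) ℚ) p')
          = Polynomial.aeval (R := ℚ) (![z, w] j) p' := by
      intro p' j
      have h2 := Polynomial.aeval_algHom_apply (R := ℚ)
        (MvPolynomial.aeval (R := ℚ) ![z, w]) (MvPolynomial.X j) p'
      rw [← h2, MvPolynomial.aeval_X]
    have hF : MvPolynomial.aeval ![z, w] (A0 * B1 - A1 * B0) = 0 := by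
      rw [map_sub, map_mul, map_mul, hA0, hA1, hB0, hB1, hev, hev, hev, hev]
      simp only [Matrix.cons_val_zero, Matrix.cons_val_one, Matrix.head_cons]
      rw [haevalP', haevalP', haevalQ', haevalQ']
      rw [hrel]
      ring
    have hFzero : A0 * B1 - A1 * B0 = 0 := algebraicIndependent_iff.mp hindep _ hF
    have hFid : A0 * B1 = A1 * B0 := sub_eq_zero.mp hFzero
    -- push the identity into ℂ[X]
    have haevalXmap : ∀ p' : Polynomial ℚ,
        Polynomial.aeval (Polynomial.X : Polynomial ℂ) p' = p'.map (algebraMap ℚ ℂ) := by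
      intro p'
      have hhom : (Polynomial.aeval (Polynomial.X : Polynomial ℂ) :
            Polynomial ℚ →ₐ[ℚ] Polynomial ℂ)
          = Polynomial.mapAlgHom (Algebra.ofId ℚ ℂ) := by
        apply Polynomial.algHom_ext
        simp [Polynomial.mapAlgHom]
      rw [hhom]
      rw [Polynomial.coe_mapAlgHom]
      rfl
    have hCz : ∀ p' : Polynomial ℚ,
        Polynomial.aeval (Polynomial.C z) p' = Polynomial.C (Polynomial.aeval z p') := by
      intro p'
      have h2 := Polynomial.aeval_algHom_apply (R := ℚ)
        ((Polynomial.CAlgHom (R := ℚ) (A := ℂ))) z p'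
      simpa using h2
    set κ : MvPolynomial (Fin 2) ℚ →ₐ[ℚ] Polynomial ℂ :=
      MvPolynomial.aeval ![(Polynomial.X : Polynomial ℂ), Polynomial.C z] with hκ
    have hκev : ∀ (p' : Polynomial ℚ) (j : Fin 2),
        κ (Polynomial.aeval (MvPolynomial.X j : MvPolynomial (Fin 2) ℚ) p')
          = Polynomial.aeval (![(Polynomial.X : Polynomial ℂ), Polynomial.C z] j) p' := by
      intro p' j
      have h2 := Polynomial.aeval_algHom_apply (R := ℚ) κ (MvPolynomial.X j) p'
      rw [← h2, hκ, MvPolynomial.aeval_X]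
    have hbig := congrArg κ hFid
    rw [map_mul, map_mul, hA0, hA1, hB0, hB1, hκev, hκev, hκev, hκev] at hbig
    simp only [Matrix.cons_val_zero, Matrix.cons_val_one, Matrix.head_cons] at hbig
    rw [haevalXmap, haevalXmap, hCz, hCz, haevalP', haevalQ', hP, hQ] at hbig
    -- compare coefficients
    have hQ'ne : Q' ≠ 0 := by
      intro h0
      apply ht0
      rw [← hQ, ← haevalQ' z, h0, map_zero]
    set n : ℕ := Q'.natDegree with hn
    have hQcoeff : Q'.coeff n ≠ 0 := by
      rw [hn, ← Polynomial.leadingCoeff]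
      exact Polynomial.leadingCoeff_ne_zero.mpr hQ'ne
    have hcoeff := congrArg (fun p => Polynomial.coeff p n) hbig
    simp only [Polynomial.coeff_mul_C, Polynomial.coeff_C_mul, Polynomial.coeff_map] at hcoeff
    -- hcoeff : algebraMap ℚ ℂ (P'.coeff n) * t = s * algebraMap ℚ ℂ (Q'.coeff n)
    refine RingHom.mem_fieldRange.mpr ⟨P'.coeff n / Q'.coeff n, ?_⟩
    have hxt2 : x * t = s := hxt
    have hQc : (algebraMap ℚ ℂ) (Q'.coeff n) ≠ 0 := by
      simpa using hQcoeff
    have hfinal : (algebraMap ℚ ℂ) (P'.coeff n) = x * (algebraMap ℚ ℂ) (Q'.coeff n) :=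
      mul_right_cancel₀ ht0
        (by linear_combination hcoeff - (algebraMap ℚ ℂ) (Q'.coeff n) * hxt2)
    rw [map_div₀, div_eq_iff hQc]
    exact hfinal

  · intro x hx
    obtain ⟨q, hq⟩ := RingHom.mem_fieldRange.mp hx
    rw [Subfield.mem_inf]
    constructor
    · rw [← hq, eq_ratCast]
      exact SubfieldClass.ratCast_mem _ q
    · exact RingHom.mem_fieldRange.mpr ⟨(q : ℝ), by rw [← hq]; simp [eq_ratCast]⟩
end
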